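/- For n ∈ ℕ and i, j ∈ G with μ^{*n}(i⁻¹j) > 0, let S^{(n)}_{i,j} be a bounded linear operator on the Fock space ℓ²(I) acting on basis vectors by S^{(n)}_{i,j} e^{(m)}_{j',k} = √(μ^{*n}(i⁻¹j)·μ^{*m}(j⁻¹k)/μ^{*(n+m)}(i⁻¹k))·e^{(n+m)}_{i,k} if j' = j, and S^{(n)}_{i,j} e^{(m)}_{j',k} = 0 if j' ≠ j. Then for every x ∈ G, the operator S^{(0)}_{x,x} − ∑_{y : μ(x⁻¹y) > 0} S^{(1)}_{x,y}·(S^{(1)}_{x,y})* (a finite sum over the finitely many y with μ(x⁻¹y) > 0, and * denoting the Hilbert space adjoint) equals the orthogonal projection of ℓ²(I) onto the one-dimensional span of the basis vector e^{(0)}_{x,x}. -/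

import Mathlib

open Filter Topology
open scoped Classical RealInnerProductSpace

noncomputable section

/-- The index set of the Fock space of the random walk: triples (m, j, k) with
μ^{*m}(j⁻¹k) > 0. -/
def FockIndex {G : Type*} [Group G] (ν : ℕ → G → ℝ) : Type _ :=
  {p : ℕ × G × G // 0 < ν p.1 (p.2.1⁻¹ * p.2.2)}

/-- The Fock space ℓ²(I) of the random walk. -/
abbrev FockSpace {G : Type*} [Group G] (ν : ℕ → G → ℝ) : Type _ :=
  lp (fun _ : FockIndex ν => ℝ) 2

/-- The orthonormal basis vector e^{(m)}_{j,k} of the Fock space. -/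
def fockVec {G : Type*} [Group G] (ν : ℕ → G → ℝ) (i : FockIndex ν) : FockSpace ν :=
  lp.single 2 i 1

section Aux
variable {G : Type*} [Group G] {μ : G → ℝ} {ν : ℕ → G → ℝ}

lemma nu_nonneg (hμnn : ∀ g : G, 0 ≤ μ g)
    (hν0 : ∀ x : G, ν 0 x = if x = 1 then 1 else 0)
    (hνs : ∀ (m : ℕ) (x : G), ν (m + 1) x = ∑ᶠ g : G, ν m g * μ (g⁻¹ * x)) :
    ∀ (m : ℕ) (x : G), 0 ≤ ν m x := by
  intro m
  induction m with
  | zero => intro x; rw [hν0]; split <;> norm_num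
  | succ m ih =>
    intro x; rw [hνs]
    exact finsum_nonneg fun g => mul_nonneg (ih g) (hμnn _)

lemma nu_conv (hμfin : (Function.support μ).Finite)
    (hνs : ∀ (m : ℕ) (x : G), ν (m + 1) x = ∑ᶠ g : G, ν m g * μ (g⁻¹ * x))
    (m : ℕ) (x : G) :
    ν (m + 1) x = ∑ h ∈ hμfin.toFinset, ν m (x * h⁻¹) * μ h := by
  rw [hνs]
  rw [finsum_eq_sum_of_support_subset _
    (s := hμfin.toFinset.image (fun h => x * h⁻¹)) ?hsub]
  · rw [Finset.sum_image (fun a _ b _ h => by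
      have := congrArg (fun t => x⁻¹ * t) h
      simpa using this)]
    refine Finset.sum_congr rfl fun h _ => ?_
    congr 1
    group
  case hsub =>
    intro g hg
    have hμg : μ (g⁻¹ * x) ≠ 0 := by
      intro h0
      simp [Function.mem_support, h0] at hg
    simp only [Finset.coe_image, Set.mem_image, Finset.mem_coe,
      Set.Finite.mem_toFinset, Function.mem_support]
    exact ⟨g⁻¹ * x, hμg, by group⟩

lemma nu_rev (hμfin : (Function.support μ).Finite)
    (hν0 : ∀ x : G, ν 0 x = if x = 1 then 1 else 0)
    (hνs : ∀ (m : ℕ) (x : G), ν (m + 1) x = ∑ᶠ g : G, ν m g * μ (g⁻¹ * x)) :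
    ∀ (m : ℕ) (x : G), ν (m + 1) x = ∑ g ∈ hμfin.toFinset, μ g * ν m (g⁻¹ * x) := by
  intro m
  induction m with
  | zero =>
    intro x
    rw [nu_conv hμfin hνs 0 x]
    refine Finset.sum_congr rfl fun h _ => ?_
    by_cases hhx : h = x
    · subst hhx; simp [hν0, mul_comm]
    · rw [hν0, hν0, if_neg (by simpa [mul_inv_eq_one] using Ne.symm hhx),
        if_neg (by simpa [inv_mul_eq_one] using hhx)]
      ring
  | succ m ih =>
    intro x
    calc ν (m + 1 + 1) x = ∑ h ∈ hμfin.toFinset, ν (m + 1) (x * h⁻¹) * μ h :=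
          nu_conv hμfin hνs (m + 1) x
      _ = ∑ h ∈ hμfin.toFinset, (∑ g ∈ hμfin.toFinset, μ g * ν m (g⁻¹ * (x * h⁻¹))) * μ h := by
          exact Finset.sum_congr rfl fun h _ => by rw [ih]
      _ = ∑ g ∈ hμfin.toFinset, μ g * ∑ h ∈ hμfin.toFinset, ν m (g⁻¹ * x * h⁻¹) * μ h := by
          simp only [Finset.sum_mul, Finset.mul_sum, mul_assoc]
          rw [Finset.sum_comm]
      _ = ∑ g ∈ hμfin.toFinset, μ g * ν (m + 1) (g⁻¹ * x) := by
          refine Finset.sum_congr rfl fun g _ => ?_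
          rw [nu_conv hμfin hνs m (g⁻¹ * x)]

lemma nu_one (hμfin : (Function.support μ).Finite)
    (hν0 : ∀ x : G, ν 0 x = if x = 1 then 1 else 0)
    (hνs : ∀ (m : ℕ) (x : G), ν (m + 1) x = ∑ᶠ g : G, ν m g * μ (g⁻¹ * x))
    (g : G) : ν 1 g = μ g := by
  have h : ν 1 g = ∑ t ∈ hμfin.toFinset, μ t * ν 0 (t⁻¹ * g) := nu_rev hμfin hν0 hνs 0 g
  rw [h]
  have : ∀ t ∈ hμfin.toFinset, μ t * ν 0 (t⁻¹ * g) = if t = g then μ t else 0 := by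
    intro t _
    rw [hν0]
    by_cases htg : t = g
    · simp [htg]
    · rw [if_neg (by simpa [inv_mul_eq_one] using htg), if_neg htg, mul_zero]
  rw [Finset.sum_congr rfl this, Finset.sum_ite_eq' hμfin.toFinset g (fun t => μ t)]
  split
  · rfl
  · next hgmem =>
    by_contra hne
    exact hgmem (by simpa [Set.Finite.mem_toFinset, Function.mem_support] using Ne.symm hne)

lemma nu_pos_mul (hμnn : ∀ g : G, 0 ≤ μ g) (hμfin : (Function.support μ).Finite)
    (hν0 : ∀ x : G, ν 0 x = if x = 1 then 1 else 0)
    (hνs : ∀ (m : ℕ) (x : G), ν (m + 1) x = ∑ᶠ g : G, ν m g * μ (g⁻¹ * x))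
    {g h : G} {a : ℕ} (hg : 0 < μ g) (hh : 0 < ν a h) : 0 < ν (a + 1) (g * h) := by
  rw [nu_rev hμfin hν0 hνs a (g * h)]
  have hgF : g ∈ hμfin.toFinset := by
    simp only [Set.Finite.mem_toFinset, Function.mem_support]
    exact ne_of_gt hg
  have key : 0 < μ g * ν a (g⁻¹ * (g * h)) := by
    have hgh : g⁻¹ * (g * h) = h := by group
    rw [hgh]; exact mul_pos hg hh
  refine lt_of_lt_of_le key ?_
  exact Finset.single_le_sum (f := fun t => μ t * ν a (t⁻¹ * (g * h)))
    (fun t _ => mul_nonneg (hμnn t) (nu_nonneg hμnn hν0 hνs a _)) hgF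

end Aux

lemma fockIndex_mk_eq {G : Type*} [Group G] {ν : ℕ → G → ℝ} {p q : ℕ × G × G}
    {h : 0 < ν p.1 (p.2.1⁻¹ * p.2.2)} {h' : 0 < ν q.1 (q.2.1⁻¹ * q.2.2)} :
    ((⟨p, h⟩ : FockIndex ν) = ⟨q, h'⟩) ↔ p = q :=
  Subtype.ext_iff

/-- S^{(0)}_{x,x} minus the finite sum of the range projections
S^{(1)}_{x,y}(S^{(1)}_{x,y})* over the y with μ(x⁻¹y) > 0 is the orthogonal projection
onto the one-dimensional span of the basis vector e^{(0)}_{x,x}. -/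
theorem stmt16 {G : Type*} [Group G] [Countable G]
(μ : G → ℝ) (hμnn : ∀ g : G, 0 ≤ μ g)
    (hμfin : (Function.support μ).Finite)
    (hμgen : Subsemigroup.closure (Function.support μ) = ⊤)
    (hμsum : ∑ᶠ g : G, μ g = 1)
    (ν : ℕ → G → ℝ)
    (hν0 : ∀ x : G, ν 0 x = if x = 1 then 1 else 0)
    (hνs : ∀ (m : ℕ) (x : G), ν (m + 1) x = ∑ᶠ g : G, ν m g * μ (g⁻¹ * x))
    (S : ℕ → G → G → (FockSpace ν →L[ℝ] FockSpace ν))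
    (hS : ∀ (n : ℕ) (i j : G), 0 < ν n (i⁻¹ * j) →
      ∀ (m : ℕ) (j' k : G) (h : 0 < ν m (j'⁻¹ * k)),
        (j' = j → ∀ h' : 0 < ν (n + m) (i⁻¹ * k),
          S n i j (fockVec ν ⟨(m, j', k), h⟩) =
            Real.sqrt (ν n (i⁻¹ * j) * ν m (j⁻¹ * k) / ν (n + m) (i⁻¹ * k)) •
              fockVec ν ⟨(n + m, i, k), h'⟩) ∧
        (j' ≠ j → S n i j (fockVec ν ⟨(m, j', k), h⟩) = 0)) :
    ∀ (x : G) (hx : 0 < ν 0 (x⁻¹ * x)) (v : FockSpace ν),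
      (S 0 x x -
          ∑ᶠ y ∈ {y : G | 0 < μ (x⁻¹ * y)},
            S 1 x y ∘L ContinuousLinearMap.adjoint (S 1 x y)) v =
        ⟪fockVec ν ⟨(0, x, x), hx⟩, v⟫ • fockVec ν ⟨(0, x, x), hx⟩ := by
  intro x hx v
  classical
  have hnn : ∀ (m : ℕ) (g : G), 0 ≤ ν m g := nu_nonneg hμnn hν0 hνs
  have h1 : ∀ g : G, ν 1 g = μ g := nu_one hμfin hν0 hνs
  -- coordinates via inner products
  have coord : ∀ (q : FockIndex ν) (w : FockSpace ν), ⟪fockVec ν q, w⟫ = w q := by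
    intro q w
    rw [fockVec, lp.inner_single_left]
    simp [RCLike.inner_apply]
  have bcoord : ∀ p q : FockIndex ν, fockVec ν p q = if q = p then (1:ℝ) else 0 := by
    intro p q
    by_cases h : q = p
    · subst h; simp [fockVec, lp.single_apply_self]
    · rw [if_neg h]; exact lp.single_apply_ne 2 p 1 h
  have orth : ∀ p q : FockIndex ν, ⟪fockVec ν p, fockVec ν q⟫ = if p = q then (1:ℝ) else 0 := by
    intro p q; rw [coord p (fockVec ν q), bcoord]
  have scoord : ∀ (r : ℝ) (w : FockSpace ν) (q : FockIndex ν), (r • w) q = r * w q := by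
    intro r w q
    rw [lp.coeFn_smul]; simp
  have zcoord : ∀ q : FockIndex ν, (0 : FockSpace ν) q = 0 := by
    intro q; rw [lp.coeFn_zero]; simp
  have coord : ∀ (q : {p : ℕ × G × G // 0 < ν p.1 (p.2.1⁻¹ * p.2.2)}) (w : FockSpace ν), ⟪fockVec ν q, w⟫ = w q := coord
  have bcoord : ∀ p q : {p : ℕ × G × G // 0 < ν p.1 (p.2.1⁻¹ * p.2.2)}, fockVec ν p q = if q = p then (1:ℝ) else 0 := by
    intro p q; convert bcoord p q; exact Iff.rfl
  have orth : ∀ p q : {p : ℕ × G × G // 0 < ν p.1 (p.2.1⁻¹ * p.2.2)}, ⟪fockVec ν p, fockVec ν q⟫ = if p = q then (1:ℝ) else 0 := by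
    intro p q; convert orth p q; exact Iff.rfl
  have scoord : ∀ (r : ℝ) (w : FockSpace ν) (q : {p : ℕ × G × G // 0 < ν p.1 (p.2.1⁻¹ * p.2.2)}), (r • w) q = r * w q := scoord
  have zcoord : ∀ q : {p : ℕ × G × G // 0 < ν p.1 (p.2.1⁻¹ * p.2.2)}, (0 : FockSpace ν) q = 0 := zcoord
  -- the finite set Y
  set F := hμfin.toFinset with hF
  set Y : Finset G := F.image (fun g => x * g) with hY
  have hYmem : ∀ y : G, y ∈ Y ↔ 0 < μ (x⁻¹ * y) := by
    intro y
    simp only [hY, Finset.mem_image, hF, Set.Finite.mem_toFinset, Function.mem_support]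
    constructor
    · rintro ⟨g, hg, rfl⟩
      have hgg : x⁻¹ * (x * g) = g := by group
      rw [hgg]
      exact lt_of_le_of_ne (hμnn g) (Ne.symm hg)
    · intro h
      exact ⟨x⁻¹ * y, h.ne', by group⟩
  have hsetY : {y : G | 0 < μ (x⁻¹ * y)} = ↑Y := by
    ext y; simp [hYmem y, Set.mem_setOf_eq]
  rw [hsetY, finsum_mem_coe_finset]
  -- S⁰ on basis vectors
  have hS0 : ∀ (m : ℕ) (j k : G) (h : 0 < ν m (j⁻¹ * k)),
      S 0 x x (fockVec ν ⟨(m, j, k), h⟩) =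
        if j = x then fockVec ν ⟨(m, j, k), h⟩ else 0 := by
    intro m j k h
    by_cases hj : j = x
    · subst hj
      have h' : 0 < ν (0 + m) (j⁻¹ * k) := by rwa [zero_add]
      rw [if_pos rfl, (hS 0 j j hx m j k h).1 rfl h']
      have h00 : ν 0 (j⁻¹ * j) = 1 := by simp [hν0]
      have hidx : (⟨(0 + m, j, k), h'⟩ : FockIndex ν) = ⟨(m, j, k), h⟩ :=
        Subtype.ext (by simp)
      have hnm : ν (0 + m) (j⁻¹ * k) = ν m (j⁻¹ * k) := by rw [zero_add]
      rw [hidx, h00, hnm, one_mul, div_self (ne_of_gt h), Real.sqrt_one, one_smul]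
    · rw [if_neg hj]; exact (hS 0 x x hx m j k h).2 hj
  -- adjoint of S⁰ on basis vectors
  have hadj0 : ∀ (m : ℕ) (j k : G) (hq : 0 < ν m (j⁻¹ * k)),
      ContinuousLinearMap.adjoint (S 0 x x) (fockVec ν ⟨(m, j, k), hq⟩) =
        if j = x then fockVec ν ⟨(m, j, k), hq⟩ else 0 := by
    intro m j k hq
    refine lp.ext (funext fun r => ?_)
    obtain ⟨⟨a, b, c⟩, hr⟩ := r
    rw [← coord, ContinuousLinearMap.adjoint_inner_right, hS0 a b c hr]
    by_cases hj : j = x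
    · rw [if_pos hj, bcoord]
      by_cases hb : b = x
      · rw [if_pos hb, orth]
      · rw [if_neg hb, inner_zero_left, if_neg]
        intro he
        obtain ⟨h1', h2', h3'⟩ : a = m ∧ b = j ∧ c = k := by
          simpa [Prod.ext_iff] using congrArg (fun t : FockIndex ν => t.1) he
        exact hb (h2'.trans hj)
    · rw [if_neg hj, zcoord]
      by_cases hb : b = x
      · rw [if_pos hb, orth, if_neg]
        intro he
        obtain ⟨h1', h2', h3'⟩ : a = m ∧ b = j ∧ c = k := by
          simpa [Prod.ext_iff] using congrArg (fun t : FockIndex ν => t.1) he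
        exact hj (h2' ▸ hb)
      · rw [if_neg hb, inner_zero_left]
  -- positivity transfer for S¹
  have hS1pos : ∀ (y : G), 0 < μ (x⁻¹ * y) → ∀ (a : ℕ) (c : G),
      0 < ν a (y⁻¹ * c) → 0 < ν (1 + a) (x⁻¹ * c) := by
    intro y hy a c hc
    have heq : (x⁻¹ * y) * (y⁻¹ * c) = x⁻¹ * c := by group
    rw [add_comm 1 a, ← heq]
    exact nu_pos_mul hμnn hμfin hν0 hνs hy hc
  -- S¹ on basis vectors
  have hS1apply : ∀ (y : G) (hy : 0 < μ (x⁻¹ * y)) (a : ℕ) (c : G) (hc : 0 < ν a (y⁻¹ * c)),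
      S 1 x y (fockVec ν ⟨(a, y, c), hc⟩) =
        Real.sqrt (μ (x⁻¹ * y) * ν a (y⁻¹ * c) / ν (1 + a) (x⁻¹ * c)) •
          fockVec ν ⟨(1 + a, x, c), hS1pos y hy a c hc⟩ := by
    intro y hy a c hc
    have hy1 : 0 < ν 1 (x⁻¹ * y) := by rw [h1]; exact hy
    have hres := (hS 1 x y hy1 a y c hc).1 rfl (hS1pos y hy a c hc)
    rw [hres, h1]
  have hS1zero : ∀ (y : G) (hy : 0 < μ (x⁻¹ * y)) (a : ℕ) (b c : G)
      (hr : 0 < ν a (b⁻¹ * c)), b ≠ y →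
      S 1 x y (fockVec ν ⟨(a, b, c), hr⟩) = 0 := by
    intro y hy a b c hr hb
    exact (hS 1 x y (by rw [h1]; exact hy) a b c hr).2 hb
  -- adjoint of S¹ on basis vectors: zero case
  have hadj1zero : ∀ (y : G) (hy : 0 < μ (x⁻¹ * y)) (m : ℕ) (j k : G)
      (hq : 0 < ν m (j⁻¹ * k)),
      (∀ a : ℕ, j = x → m = 1 + a → ¬ 0 < ν a (y⁻¹ * k)) →
      ContinuousLinearMap.adjoint (S 1 x y) (fockVec ν ⟨(m, j, k), hq⟩) = 0 := by
    intro y hy m j k hq hcond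
    refine lp.ext (funext fun r => ?_)
    obtain ⟨⟨a, b, c⟩, hr⟩ := r
    rw [← coord, ContinuousLinearMap.adjoint_inner_right, zcoord]
    by_cases hb : b = y
    · subst hb
      rw [hS1apply b hy a c hr, real_inner_smul_left, orth, if_neg, mul_zero]
      intro he
      obtain ⟨h1', h2', h3'⟩ : 1 + a = m ∧ x = j ∧ c = k := by
        simpa [Prod.ext_iff] using congrArg (fun t : FockIndex ν => t.1) he
      exact hcond a h2'.symm h1'.symm (h3' ▸ hr)
    · rw [hS1zero y hy a b c hr hb, inner_zero_left]
  -- adjoint of S¹ on basis vectors: main case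
  have hadj1pos : ∀ (y : G) (hy : 0 < μ (x⁻¹ * y)) (m' : ℕ) (k : G)
      (hq : 0 < ν (1 + m') (x⁻¹ * k)) (hyk : 0 < ν m' (y⁻¹ * k)),
      ContinuousLinearMap.adjoint (S 1 x y) (fockVec ν ⟨(1 + m', x, k), hq⟩) =
        Real.sqrt (μ (x⁻¹ * y) * ν m' (y⁻¹ * k) / ν (1 + m') (x⁻¹ * k)) •
          fockVec ν ⟨(m', y, k), hyk⟩ := by
    intro y hy m' k hq hyk
    refine lp.ext (funext fun r => ?_)
    obtain ⟨⟨a, b, c⟩, hr⟩ := r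
    rw [← coord, ContinuousLinearMap.adjoint_inner_right, scoord, bcoord]
    by_cases hb : b = y
    · subst hb
      rw [hS1apply b hy a c hr, real_inner_smul_left, orth]
      by_cases hac : a = m' ∧ c = k
      · obtain ⟨rfl, rfl⟩ := hac
        rw [if_pos rfl, if_pos rfl]
      · rw [if_neg, if_neg, mul_zero, mul_zero]
        · intro he
          obtain ⟨h1', h2', h3'⟩ : a = m' ∧ b = b ∧ c = k := by
            simpa [Prod.ext_iff] using congrArg (fun t : FockIndex ν => t.1) he
          exact hac ⟨h1', h3'⟩
        · intro he
          obtain ⟨h1', h2', h3'⟩ : 1 + a = 1 + m' ∧ x = x ∧ c = k := by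
            simpa [Prod.ext_iff] using congrArg (fun t : FockIndex ν => t.1) he
          exact hac ⟨by omega, h3'⟩
    · rw [hS1zero y hy a b c hr hb, inner_zero_left, if_neg, mul_zero]
      intro he
      obtain ⟨h1', h2', h3'⟩ : a = m' ∧ b = y ∧ c = k := by
        simpa [Prod.ext_iff] using congrArg (fun t : FockIndex ν => t.1) he
      exact hb h2'
  -- now compute coordinatewise
  refine lp.ext (funext fun q => ?_)
  obtain ⟨⟨m, j, k⟩, hq⟩ := q
  have hLHS : ((S 0 x x - ∑ y ∈ Y, S 1 x y ∘L ContinuousLinearMap.adjoint (S 1 x y)) v)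
        ⟨(m, j, k), hq⟩ =
      (S 0 x x v) ⟨(m, j, k), hq⟩ -
        ∑ y ∈ Y, (S 1 x y (ContinuousLinearMap.adjoint (S 1 x y) v)) ⟨(m, j, k), hq⟩ := by
    rw [ContinuousLinearMap.sub_apply, ContinuousLinearMap.sum_apply]
    erw [lp.coeFn_sub, Pi.sub_apply]
    erw [lp.coeFn_sum, Finset.sum_apply]
    rfl
  rw [hLHS]
  have hS0v : (S 0 x x v) ⟨(m, j, k), hq⟩ =
      if j = x then v ⟨(m, j, k), hq⟩ else 0 := by
    rw [← coord ⟨(m, j, k), hq⟩ (S 0 x x v), ← ContinuousLinearMap.adjoint_inner_left,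
      hadj0 m j k hq]
    by_cases hj : j = x
    · rw [if_pos hj, if_pos hj, coord]
    · rw [if_neg hj, if_neg hj, inner_zero_left]
  rw [hS0v]
  have hRHS : (⟪fockVec ν ⟨(0, x, x), hx⟩, v⟫ • fockVec ν ⟨(0, x, x), hx⟩) ⟨(m, j, k), hq⟩ =
      if (⟨(m, j, k), hq⟩ : FockIndex ν) = ⟨(0, x, x), hx⟩ then v ⟨(0, x, x), hx⟩ else 0 := by
    rw [scoord, bcoord, coord]
    by_cases h : (⟨(m, j, k), hq⟩ : FockIndex ν) = ⟨(0, x, x), hx⟩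
    · rw [if_pos h, if_pos h, mul_one]
    · rw [if_neg h, if_neg h, mul_zero]
  rw [hRHS]
  by_cases hj : j = x
  · subst hj
    cases m with
    | zero =>
      -- here k = j
      have hk : j = k := by
        by_contra hk
        rw [hν0, if_neg (by simpa [inv_mul_eq_one] using hk)] at hq
        exact lt_irrefl 0 hq
      subst hk
      have hterm : ∀ y ∈ Y, (S 1 j y (ContinuousLinearMap.adjoint (S 1 j y) v))
          (⟨(0, j, j), hq⟩ : FockIndex ν) = 0 := by
        intro y hyY
        have hy : 0 < μ (j⁻¹ * y) := (hYmem y).1 hyY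
        rw [← coord ⟨(0, j, j), hq⟩, ← ContinuousLinearMap.adjoint_inner_left,
          hadj1zero y hy 0 j j hq (fun a _ h0 => by omega), inner_zero_left]
      rw [Finset.sum_congr rfl hterm, Finset.sum_const, smul_zero, sub_zero,
        if_pos rfl, if_pos (Subtype.ext rfl)]
    | succ m' =>
      rw [if_pos rfl, if_neg (by
        intro he
        obtain ⟨h1', h2', h3'⟩ : m' + 1 = 0 ∧ j = j ∧ k = j := by
          simpa [Prod.ext_iff] using congrArg (fun t : FockIndex ν => t.1) he
        omega)]
      have hq' : 0 < ν (1 + m') (j⁻¹ * k) := by rwa [add_comm]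
      have hqidx : (⟨(m' + 1, j, k), hq⟩ : FockIndex ν) = ⟨(1 + m', j, k), hq'⟩ :=
        Subtype.ext (by simp [add_comm])
      have hterm : ∀ y ∈ Y, (S 1 j y (ContinuousLinearMap.adjoint (S 1 j y) v))
          (⟨(m' + 1, j, k), hq⟩ : FockIndex ν) =
          μ (j⁻¹ * y) * ν m' (y⁻¹ * k) / ν (m' + 1) (j⁻¹ * k) *
            v ⟨(m' + 1, j, k), hq⟩ := by
        intro y hyY
        have hy : 0 < μ (j⁻¹ * y) := (hYmem y).1 hyY
        rw [← coord ⟨(m' + 1, j, k), hq⟩, ← ContinuousLinearMap.adjoint_inner_left, hqidx]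
        by_cases hyk : 0 < ν m' (y⁻¹ * k)
        · rw [hadj1pos y hy m' k hq' hyk, real_inner_smul_left,
            ContinuousLinearMap.adjoint_inner_right, hS1apply y hy m' k hyk,
            real_inner_smul_left, coord]
          have hidx2 : (⟨(1 + m', j, k), hS1pos y hy m' k hyk⟩ : FockIndex ν) =
              ⟨(m' + 1, j, k), hq⟩ := Subtype.ext (by simp [add_comm])
          rw [hidx2, ← mul_assoc,
            Real.mul_self_sqrt (by
              apply div_nonneg (mul_nonneg (le_of_lt hy) (hnn _ _)) (hnn _ _)),
            add_comm 1 m']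
        · rw [hadj1zero y hy (1 + m') j k hq' (fun a _ hma => by
            have haa : a = m' := by omega
            rw [haa]; exact hyk), inner_zero_left]
          have hyk0 : ν m' (y⁻¹ * k) = 0 := le_antisymm (not_lt.mp hyk) (hnn m' _)
          rw [hyk0, mul_zero, zero_div, zero_mul]
      rw [Finset.sum_congr rfl hterm]
      have hsum : ∑ y ∈ Y, μ (j⁻¹ * y) * ν m' (y⁻¹ * k) = ν (m' + 1) (j⁻¹ * k) := by
        rw [nu_rev hμfin hν0 hνs m' (j⁻¹ * k), hY]
        rw [Finset.sum_image (fun a _ b _ h => by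
          simpa using congrArg (fun t => j⁻¹ * t) h)]
        refine Finset.sum_congr rfl fun g _ => ?_
        have e1 : j⁻¹ * (j * g) = g := by group
        have e2 : (j * g)⁻¹ * k = g⁻¹ * (j⁻¹ * k) := by group
        rw [e1, e2]
      have hfin : ∑ y ∈ Y, μ (j⁻¹ * y) * ν m' (y⁻¹ * k) / ν (m' + 1) (j⁻¹ * k) *
          v ⟨(m' + 1, j, k), hq⟩ = v ⟨(m' + 1, j, k), hq⟩ := by
        rw [← Finset.sum_mul, ← Finset.sum_div, hsum, div_self (ne_of_gt hq), one_mul]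
      rw [hfin, sub_self]
  · rw [if_neg hj, if_neg (by
      intro he
      obtain ⟨h1', h2', h3'⟩ : m = 0 ∧ j = x ∧ k = x := by
        simpa [Prod.ext_iff] using congrArg (fun t : FockIndex ν => t.1) he
      exact hj h2')]
    have hterm : ∀ y ∈ Y, (S 1 x y (ContinuousLinearMap.adjoint (S 1 x y) v))
        (⟨(m, j, k), hq⟩ : FockIndex ν) = 0 := by
      intro y hyY
      have hy : 0 < μ (x⁻¹ * y) := (hYmem y).1 hyY
      rw [← coord ⟨(m, j, k), hq⟩, ← ContinuousLinearMap.adjoint_inner_left,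
        hadj1zero y hy m j k hq (fun a hjx _ => absurd hjx hj), inner_zero_left]
    rw [Finset.sum_congr rfl hterm, Finset.sum_const, smul_zero, sub_zero]
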